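/- arXiv:2001.04179 — 3 statements merged into one kernel-verified Lean document; each statement's English description precedes it below -/
import Mathlib

section
/- Let A be a nonzero real m×n matrix of rank r, let α > 0, and define δ = max_{1≤i≤r} |1 − α σ_i(A)²/‖A‖_F²|, where σ_i(A) are the nonzero singular values of A. Then for every vector u in the row space ran(Aᵀ) and every natural number k, ‖(I − α AᵀA/‖A‖_F²)^k u‖₂ ≤ δ^k ‖u‖₂. -/
open Matrix
open RealInnerProductSpace

/-- The squared Frobenius norm of a real matrix. -/
noncomputable def frobSq {ι κ : Type*} [Fintype ι] [Fintype κ] (A : Matrix ι κ ℝ) : ℝ :=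
  ∑ i, ∑ j, (A i j) ^ 2

theorem stmt0 {m n : ℕ} (A : Matrix (Fin m) (Fin n) ℝ) (hA : A ≠ 0)
    (α : ℝ) (hα : 0 < α)
    (hH : (Aᵀ * A).IsHermitian) (δ : ℝ)
    (hδ : IsGreatest {x : ℝ | ∃ i, hH.eigenvalues i ≠ 0 ∧
      x = |1 - α * hH.eigenvalues i / frobSq A|} δ)
    (u : EuclideanSpace ℝ (Fin n))
    (hu : u ∈ LinearMap.range (Matrix.toEuclideanLin Aᵀ)) (k : ℕ) :
    ‖Matrix.toEuclideanLin ((1 - (α / frobSq A) • (Aᵀ * A)) ^ k) u‖ ≤ δ ^ k * ‖u‖ := by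
  classical
  set c : ℝ := α / frobSq A with hc
  set M : Matrix (Fin n) (Fin n) ℝ := 1 - c • (Aᵀ * A) with hM
  set v := hH.eigenvectorBasis with hv
  set μ := hH.eigenvalues with hμ
  obtain ⟨i0, -, h0⟩ := hδ.1
  have hδ0 : 0 ≤ δ := h0 ▸ abs_nonneg _
  have hδk : 0 ≤ δ ^ k := pow_nonneg hδ0 k
  have hMH : M.IsHermitian := by
    simp [Matrix.IsHermitian, hM, Matrix.conjTranspose_sub, Matrix.conjTranspose_smul, hH.eq]
  have heig : ∀ (j : ℕ) (i : Fin n),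
      (M ^ j) *ᵥ ⇑(v i) = ((1 - c * μ i) ^ j) • ⇑(v i) := by
    intro j i
    induction j with
    | zero => simp
    | succ j ih =>
        have h1 : M *ᵥ ⇑(v i) = (1 - c * μ i) • ⇑(v i) := by
          rw [hM, Matrix.sub_mulVec, Matrix.one_mulVec, Matrix.smul_mulVec,
            hH.mulVec_eigenvectorBasis i, smul_smul, sub_smul, one_smul]
        rw [pow_succ, ← Matrix.mulVec_mulVec, h1, Matrix.mulVec_smul, ih,
          smul_smul, pow_succ]
        ring_nf
  set T := Matrix.toEuclideanLin (M ^ k) with hT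
  have hsym : T.IsSymmetric := Matrix.isHermitian_iff_isSymmetric.mp (hMH.pow k)
  have heig' : ∀ i, T (v i) = ((1 - c * μ i) ^ k) • (v i) := by
    intro i
    apply (WithLp.equiv 2 (Fin n → ℝ)).injective
    simp only [hT, WithLp.equiv_apply, Matrix.ofLp_toEuclideanLin_apply, WithLp.ofLp_smul]
    exact heig k i
  -- components of u along kernel eigenvectors vanish
  obtain ⟨w, rfl⟩ := hu
  set u := Matrix.toEuclideanLin Aᵀ w with hu'
  have hker : ∀ i, μ i = 0 → ⟪v i, u⟫ = 0 := by
    intro i hi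
    have hAv : A *ᵥ ⇑(v i) = 0 := by
      have h2 : (Aᵀ * A) *ᵥ ⇑(v i) = 0 := by
        rw [hH.mulVec_eigenvectorBasis i, ← hμ, hi, zero_smul]
      have h3 : (A *ᵥ ⇑(v i)) ⬝ᵥ (A *ᵥ ⇑(v i)) = 0 := by
        have h4 : (A *ᵥ ⇑(v i)) ⬝ᵥ (A *ᵥ ⇑(v i)) = ⇑(v i) ⬝ᵥ ((Aᵀ * A) *ᵥ ⇑(v i)) := by
          conv_rhs => rw [← Matrix.mulVec_mulVec, Matrix.dotProduct_mulVec,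
            Matrix.vecMul_transpose]
        rw [h4, h2, dotProduct_zero]
      exact dotProduct_self_eq_zero.mp h3
    have h5 : ⟪v i, u⟫ = ⇑(v i) ⬝ᵥ (Aᵀ *ᵥ ⇑w) := by
      rw [hu']
      simp [PiLp.inner_apply, dotProduct, Matrix.toEuclideanLin_apply, mul_comm]
    have : ⟪v i, u⟫ = (A *ᵥ ⇑(v i)) ⬝ᵥ ⇑w := by
      rw [h5, Matrix.dotProduct_mulVec, Matrix.vecMul_transpose]
    rw [this, hAv, zero_dotProduct]
  have hinner : ∀ i, ⟪v i, T u⟫ = ((1 - c * μ i) ^ k) * ⟪v i, u⟫ := by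
    intro i
    rw [real_inner_comm, hsym u (v i), heig' i, real_inner_smul_right, real_inner_comm]
  have hbound : ∀ i, ⟪v i, T u⟫ ^ 2 ≤ (δ ^ k) ^ 2 * ⟪v i, u⟫ ^ 2 := by
    intro i
    by_cases hi : μ i = 0
    · rw [hinner i, hker i hi]
      simp
    · have hmem : |1 - c * μ i| ≤ δ := by
        have := hδ.2 ⟨i, hi, rfl⟩
        rwa [mul_div_right_comm] at this
      have := pow_le_pow_left₀ (abs_nonneg _) hmem k
      rw [hinner i, mul_pow]
      have h4 : ((1 - c * μ i) ^ k) ^ 2 ≤ (δ ^ k) ^ 2 := by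
        rw [← abs_pow] at this
        nlinarith [abs_nonneg ((1 - c * μ i) ^ k), le_abs_self (((1 - c * μ i) ^ k)),
          neg_abs_le ((1 - c * μ i) ^ k)]
      nlinarith [sq_nonneg (⟪v i, u⟫), sq_nonneg (⟪v i, T u⟫)]
  -- sum up
  have hTnorm : ‖T u‖ ^ 2 = ∑ i, ⟪v i, T u⟫ ^ 2 := by
    rw [← real_inner_self_eq_norm_sq, ← v.sum_inner_mul_inner (T u) (T u)]
    congr 1; ext i; rw [real_inner_comm]; ring
  have hunorm : ‖u‖ ^ 2 = ∑ i, ⟪v i, u⟫ ^ 2 := by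
    rw [← real_inner_self_eq_norm_sq, ← v.sum_inner_mul_inner u u]
    congr 1; ext i; rw [real_inner_comm]; ring
  have hfin : ‖T u‖ ^ 2 ≤ (δ ^ k * ‖u‖) ^ 2 := by
    rw [hTnorm, mul_pow, hunorm, Finset.mul_sum]
    exact Finset.sum_le_sum fun i _ => hbound i
  nlinarith [norm_nonneg (T u), norm_nonneg u, mul_nonneg hδk (norm_nonneg u)]
end

section
/- Let A be a nonzero real m×n matrix with column partition {J_1,…,J_t}, b ∈ ℝ^m, b_⊥ = (I − AA†)b, α > 0, and β^J = max_j ‖A_{:,J_j}‖₂²/‖A_{:,J_j}‖_F². Suppose z^{k−1} − b_⊥ ∈ ran(A) and z^k = z^{k−1} − (α/‖A_{:,J_j}‖_F²) A_{:,J_j}(A_{:,J_j})ᵀ z^{k−1}, where j is sampled with probability ‖A_{:,J_j}‖_F²/‖A‖_F². If 0 < α < 2/β^J, then E‖z^k − b_⊥‖₂² ≤ ρ ‖z^{k−1} − b_⊥‖₂² with ρ = 1 − (2α − α²β^J)σ_r(A)²/‖A‖_F², where σ_r(A) is the smallest nonzero singular value of A. -/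
open Matrix

/-- The spectral (ℓ₂ operator) norm of a real matrix. -/
noncomputable def specNorm {ι κ : Type*} [Fintype ι] [Fintype κ] [DecidableEq κ]
    (A : Matrix ι κ ℝ) : ℝ :=
  ‖LinearMap.toContinuousLinearMap (Matrix.toEuclideanLin A)‖

/-- The squared Euclidean norm of a vector. -/
noncomputable def norm2Sq {ι : Type*} [Fintype ι] (v : ι → ℝ) : ℝ := ∑ i, (v i) ^ 2

/-- `P` is the Moore–Penrose pseudoinverse of `A`. -/
def IsMoorePenrose {m n : ℕ} (A : Matrix (Fin m) (Fin n) ℝ)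
    (P : Matrix (Fin n) (Fin m) ℝ) : Prop :=
  A * P * A = A ∧ P * A * P = P ∧ (A * P)ᵀ = A * P ∧ (P * A)ᵀ = P * A

/-- The column submatrix of `A` indexed by the finite set `J`. -/
def colSub {m n : ℕ} (A : Matrix (Fin m) (Fin n) ℝ) (J : Finset (Fin n)) :
    Matrix (Fin m) J ℝ :=
  A.submatrix id (fun j => (j : Fin n))

lemma norm2Sq_dot {ι : Type*} [Fintype ι] (v : ι → ℝ) : norm2Sq v = v ⬝ᵥ v := by
  simp [norm2Sq, dotProduct, sq]

lemma norm2Sq_nonneg {ι : Type*} [Fintype ι] (v : ι → ℝ) : 0 ≤ norm2Sq v :=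
  Finset.sum_nonneg fun _ _ => sq_nonneg _

lemma frobSq_nonneg {ι κ : Type*} [Fintype ι] [Fintype κ] (M : Matrix ι κ ℝ) : 0 ≤ frobSq M :=
  Finset.sum_nonneg fun _ _ => Finset.sum_nonneg fun _ _ => sq_nonneg _

lemma frobSq_pos {ι κ : Type*} [Fintype ι] [Fintype κ] (M : Matrix ι κ ℝ) (hM : M ≠ 0) :
    0 < frobSq M := by
  rcases (frobSq_nonneg M).lt_or_eq with h | h
  · exact h
  · exfalso
    apply hM
    ext i k
    have h1 := (Finset.sum_eq_zero_iff_of_nonneg (fun i _ =>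
      Finset.sum_nonneg fun j _ => sq_nonneg (M i j))).mp h.symm i (Finset.mem_univ i)
    have h2 := (Finset.sum_eq_zero_iff_of_nonneg (fun j _ => sq_nonneg (M i j))).mp h1 k
      (Finset.mem_univ k)
    simpa using pow_eq_zero_iff (n := 2) (by norm_num) |>.mp h2

lemma euclid_norm_sq {κ' : Type*} [Fintype κ'] (y : EuclideanSpace ℝ κ') :
    ‖y‖ ^ 2 = norm2Sq (WithLp.equiv 2 (κ' → ℝ) y) := by
  rw [EuclideanSpace.norm_eq, Real.sq_sqrt (Finset.sum_nonneg fun i _ => sq_nonneg _)]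
  simp [norm2Sq, Real.norm_eq_abs, sq_abs]

lemma norm2Sq_mulVec_le {ι κ : Type*} [Fintype ι] [Fintype κ] [DecidableEq κ]
    (M : Matrix ι κ ℝ) (u : κ → ℝ) :
    norm2Sq (M *ᵥ u) ≤ specNorm M ^ 2 * norm2Sq u := by
  set T := LinearMap.toContinuousLinearMap (Matrix.toEuclideanLin M) with hT
  set x : EuclideanSpace ℝ κ := (WithLp.equiv 2 _).symm u with hx
  have h := T.le_opNorm x
  have h2 : ‖T x‖ ^ 2 ≤ ‖T‖ ^ 2 * ‖x‖ ^ 2 := by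
    nlinarith [norm_nonneg (T x), norm_nonneg x, norm_nonneg T]
  have e1 : ‖T x‖ ^ 2 = norm2Sq (M *ᵥ u) := by
    rw [euclid_norm_sq (T x)]
    congr 1
  have e2 : ‖x‖ ^ 2 = norm2Sq u := by
    rw [euclid_norm_sq x]
    simp [hx]
  have e3 : specNorm M = ‖T‖ := rfl
  rw [e3, ← e1, ← e2]
  exact h2

lemma eig_lower {N : ℕ} (S : Matrix (Fin N) (Fin N) ℝ) (hS : S.IsHermitian)
    (σ2 : ℝ)
    (hlb : ∀ i, hS.eigenvalues i ≠ 0 → σ2 ≤ hS.eigenvalues i)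
    (hnn : ∀ i, 0 ≤ hS.eigenvalues i) (v : Fin N → ℝ) :
    σ2 * (v ⬝ᵥ S *ᵥ v) ≤ (S *ᵥ v) ⬝ᵥ (S *ᵥ v) := by
  classical
  set U : Matrix (Fin N) (Fin N) ℝ := (hS.eigenvectorUnitary : Matrix (Fin N) (Fin N) ℝ) with hU
  set D : Matrix (Fin N) (Fin N) ℝ := Matrix.diagonal hS.eigenvalues with hD
  have hDS : S = U * D * Uᵀ := by
    have h := hS.spectral_theorem
    simpa [hU, hD, RCLike.ofReal_real_eq_id, Matrix.star_eq_conjTranspose,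
      Matrix.conjTranspose_eq_transpose_of_trivial, Function.comp] using h
  have hUU : Uᵀ * U = 1 := by
    have h := (Matrix.mem_unitaryGroup_iff').mp hS.eigenvectorUnitary.2
    simpa [hU, Matrix.star_eq_conjTranspose, Matrix.conjTranspose_eq_transpose_of_trivial] using h
  set u : Fin N → ℝ := Uᵀ *ᵥ v with hu
  have key1 : v ⬝ᵥ S *ᵥ v = ∑ i, hS.eigenvalues i * (u i) ^ 2 := by
    conv_lhs => rw [hDS]
    rw [← Matrix.mulVec_mulVec, ← Matrix.mulVec_mulVec, Matrix.dotProduct_mulVec,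
      ← Matrix.mulVec_transpose]
    simp [hu, hD, dotProduct, Matrix.mulVec_diagonal, sq]
    exact Finset.sum_congr rfl fun x _ => by ring
  have hSS : S * S = U * (D * D) * Uᵀ := by
    conv_lhs => rw [hDS]
    calc U * D * Uᵀ * (U * D * Uᵀ) = U * (D * ((Uᵀ * U) * (D * Uᵀ))) := by
          simp only [mul_assoc]
    _ = U * (D * D) * Uᵀ := by rw [hUU, one_mul]; simp only [mul_assoc]
  have key2 : (S *ᵥ v) ⬝ᵥ (S *ᵥ v) = ∑ i, (hS.eigenvalues i) ^ 2 * (u i) ^ 2 := by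
    have hsymm : Sᵀ = S := by
      ext i j
      simpa using congrFun (congrFun hS i) j
    calc (S *ᵥ v) ⬝ᵥ (S *ᵥ v) = v ⬝ᵥ (Sᵀ *ᵥ (S *ᵥ v)) := by
          rw [Matrix.dotProduct_mulVec, Matrix.mulVec_transpose, dotProduct_comm]
    _ = v ⬝ᵥ ((S * S) *ᵥ v) := by rw [hsymm, Matrix.mulVec_mulVec]
    _ = ∑ i, (hS.eigenvalues i) ^ 2 * (u i) ^ 2 := by
          rw [hSS, ← Matrix.mulVec_mulVec, ← Matrix.mulVec_mulVec, Matrix.dotProduct_mulVec,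
            ← Matrix.mulVec_transpose]
          simp [hu, hD, dotProduct, Matrix.mulVec_diagonal, Matrix.diagonal_mul_diagonal, sq]
          exact Finset.sum_congr rfl fun x _ => by ring
  rw [key1, key2, Finset.mul_sum]
  apply Finset.sum_le_sum
  intro i _
  by_cases h : hS.eigenvalues i = 0
  · simp [h]
  · have h1 := hlb i h
    have h2 := hnn i
    nlinarith [mul_nonneg (mul_nonneg (sub_nonneg.mpr h1) h2) (sq_nonneg (u i))]

lemma colSub_T_mulVec {m n : ℕ} (A : Matrix (Fin m) (Fin n) ℝ) (J : Finset (Fin n))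
    (x : Fin m → ℝ) :
    (colSub A J)ᵀ *ᵥ x = fun k : J => (Aᵀ *ᵥ x) (k : Fin n) := rfl

lemma colSub_frob {m n : ℕ} (A : Matrix (Fin m) (Fin n) ℝ) (J : Finset (Fin n)) :
    frobSq (colSub A J) = ∑ k ∈ J, ∑ i, (A i k) ^ 2 := by
  rw [frobSq, Finset.sum_comm, ← Finset.sum_coe_sort J (fun k => ∑ i, (A i k) ^ 2)]
  rfl

lemma norm2Sq_colSubT {m n : ℕ} (A : Matrix (Fin m) (Fin n) ℝ) (J : Finset (Fin n))
    (x : Fin m → ℝ) :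
    norm2Sq ((colSub A J)ᵀ *ᵥ x) = ∑ k ∈ J, ((Aᵀ *ᵥ x) k) ^ 2 := by
  rw [colSub_T_mulVec, ← Finset.sum_coe_sort J (fun k => ((Aᵀ *ᵥ x) k) ^ 2)]
  rfl

lemma norm2Sq_sub_smul {ι : Type*} [Fintype ι] (a b : ι → ℝ) (c : ℝ) :
    norm2Sq (a - c • b) = norm2Sq a - 2 * c * (a ⬝ᵥ b) + c ^ 2 * norm2Sq b := by
  simp only [norm2Sq, dotProduct, Finset.mul_sum]
  rw [← Finset.sum_sub_distrib, ← Finset.sum_add_distrib]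
  apply Finset.sum_congr rfl
  intro i _
  simp only [Pi.sub_apply, Pi.smul_apply, smul_eq_mul]
  ring

theorem stmt11 {m n t : ℕ} (A : Matrix (Fin m) (Fin n) ℝ) (hA : A ≠ 0)
    (hH : (Aᵀ * A).IsHermitian) (σr : ℝ) (hσr : 0 < σr)
    (hleast : IsLeast {x : ℝ | ∃ i, hH.eigenvalues i ≠ 0 ∧ x = hH.eigenvalues i} (σr ^ 2))
    (P : Matrix (Fin n) (Fin m) ℝ) (hP : IsMoorePenrose A P) (b : Fin m → ℝ)
    (B : Fin t → Finset (Fin n))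
    (hdisj : ∀ i j, i ≠ j → Disjoint (B i) (B j))
    (hcover : ∀ l : Fin n, ∃ j, l ∈ B j)
    (hne : ∀ j, colSub A (B j) ≠ 0)
    (βJ : ℝ)
    (hβ : IsGreatest
      {x : ℝ | ∃ j, x = specNorm (colSub A (B j)) ^ 2 / frobSq (colSub A (B j))} βJ)
    (α : ℝ) (hα1 : 0 < α) (hα2 : α < 2 / βJ)
    (z : Fin m → ℝ)
    (hz : ∃ v : Fin n → ℝ, z - (1 - A * P).mulVec b = A.mulVec v) :
    ∑ j, (frobSq (colSub A (B j)) / frobSq A) *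
        norm2Sq (z - (α / frobSq (colSub A (B j))) •
            ((colSub A (B j)) * (colSub A (B j))ᵀ).mulVec z - (1 - A * P).mulVec b)
      ≤ (1 - (2 * α - α ^ 2 * βJ) * σr ^ 2 / frobSq A) *
          norm2Sq (z - (1 - A * P).mulVec b) := by
  classical
  obtain ⟨hP1, hP2, hP3, hP4⟩ := hP
  obtain ⟨v, hv⟩ := hz
  set bp : Fin m → ℝ := (1 - A * P) *ᵥ b with hbp
  set w : Fin m → ℝ := A *ᵥ v with hw
  set F : ℝ := frobSq A with hF
  have hFpos : 0 < F := frobSq_pos A hA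
  set f : Fin t → ℝ := fun j => frobSq (colSub A (B j)) with hf
  have hfpos : ∀ j, 0 < f j := fun j => frobSq_pos _ (hne j)
  -- β positivity
  have hβpos : 0 < βJ := by
    by_contra h
    push_neg at h
    have : 2 / βJ ≤ 0 := div_nonpos_of_nonneg_of_nonpos (by norm_num) h
    linarith
  have hαβ : α * βJ < 2 := by
    rw [lt_div_iff₀ hβpos] at hα2
    linarith
  set γ : ℝ := 2 * α - α ^ 2 * βJ with hγ
  have hγpos : 0 < γ := by
    have : γ = α * (2 - α * βJ) := by ring
    rw [this]
    exact mul_pos hα1 (by linarith)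
  -- A^T (1 - A P) = 0
  have hAAP : Aᵀ * (A * P) = Aᵀ := by
    have h1 : ((A * P) * A)ᵀ = Aᵀ := congrArg transpose hP1
    rw [Matrix.transpose_mul] at h1
    rw [← hP3]
    exact h1
  have hAb : Aᵀ *ᵥ bp = 0 := by
    rw [hbp, Matrix.mulVec_mulVec, Matrix.mul_sub, Matrix.mul_one, hAAP, sub_self, Matrix.zero_mulVec]
  have hzw : z = w + bp := by
    rw [← hv]
    abel
  -- partition sums
  have hbU : Finset.univ.biUnion B = (Finset.univ : Finset (Fin n)) := by
    apply Finset.eq_univ_iff_forall.mpr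
    intro k
    obtain ⟨j, hj⟩ := hcover k
    exact Finset.mem_biUnion.mpr ⟨j, Finset.mem_univ j, hj⟩
  have hpart : ∀ g : Fin n → ℝ, ∑ j, ∑ k ∈ B j, g k = ∑ k, g k := by
    intro g
    rw [← Finset.sum_biUnion (fun i _ j _ hij => hdisj i j hij), hbU]
  have hFsum : ∑ j, f j = F := by
    have h1 : ∀ j, f j = ∑ k ∈ B j, ∑ i, (A i k) ^ 2 := fun j => colSub_frob A (B j)
    rw [Finset.sum_congr rfl fun j _ => h1 j, hpart, hF, frobSq, Finset.sum_comm]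
  set q : Fin t → ℝ := fun j => norm2Sq ((colSub A (B j))ᵀ *ᵥ w) with hq
  have hqnn : ∀ j, 0 ≤ q j := fun j => norm2Sq_nonneg _
  have hqsum : ∑ j, q j = norm2Sq (Aᵀ *ᵥ w) := by
    have h1 : ∀ j, q j = ∑ k ∈ B j, ((Aᵀ *ᵥ w) k) ^ 2 := fun j => norm2Sq_colSubT A (B j) w
    rw [Finset.sum_congr rfl fun j _ => h1 j, hpart]
    rfl
  set Q : ℝ := norm2Sq w with hQ
  -- eigenvalue lower bound
  have hnn : ∀ i, 0 ≤ hH.eigenvalues i := by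
    intro i
    have hpsd : (Aᵀ * A).PosSemidef := by
      have h := Matrix.posSemidef_conjTranspose_mul_self A
      have he : Aᴴ = Aᵀ := by
        ext i j
        simp [Matrix.conjTranspose_apply]
      rwa [he] at h
    exact hpsd.eigenvalues_nonneg i
  have hlb : ∀ i, hH.eigenvalues i ≠ 0 → σr ^ 2 ≤ hH.eigenvalues i :=
    fun i hi => hleast.2 ⟨i, hi, rfl⟩
  have heig : σr ^ 2 * Q ≤ norm2Sq (Aᵀ *ᵥ w) := by
    have h := eig_lower (Aᵀ * A) hH (σr ^ 2) hlb hnn v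
    have e1 : Q = v ⬝ᵥ (Aᵀ * A) *ᵥ v := by
      rw [hQ, norm2Sq_dot, hw, Matrix.dotProduct_mulVec, ← Matrix.mulVec_transpose,
        Matrix.mulVec_mulVec, dotProduct_comm]
    have e2 : norm2Sq (Aᵀ *ᵥ w) = ((Aᵀ * A) *ᵥ v) ⬝ᵥ ((Aᵀ * A) *ᵥ v) := by
      rw [norm2Sq_dot, hw, Matrix.mulVec_mulVec]
    rw [e1, e2]
    exact h
  -- per-block inequality
  have hperj : ∀ j, norm2Sq (z - (α / f j) • ((colSub A (B j)) * (colSub A (B j))ᵀ) *ᵥ z - bp)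
      ≤ Q - γ * q j / f j := by
    intro j
    set M := colSub A (B j) with hM
    have hMb : (M * Mᵀ) *ᵥ bp = 0 := by
      rw [← Matrix.mulVec_mulVec, colSub_T_mulVec]
      have : (fun k : (B j) => (Aᵀ *ᵥ bp) (k : Fin n)) = (0 : (B j) → ℝ) := by
        funext k
        rw [hAb]
        rfl
      rw [this, Matrix.mulVec_zero]
    have hvec : z - (α / f j) • ((M * Mᵀ) *ᵥ z) - bp = w - (α / f j) • ((M * Mᵀ) *ᵥ w) := by
      rw [hzw, Matrix.mulVec_add, hMb, add_zero]
      abel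
    rw [hvec, norm2Sq_sub_smul]
    have hdot : w ⬝ᵥ ((M * Mᵀ) *ᵥ w) = q j := by
      rw [← Matrix.mulVec_mulVec, Matrix.dotProduct_mulVec, ← Matrix.mulVec_transpose]
      simp [hq, norm2Sq_dot, hM]
    have hNw : norm2Sq ((M * Mᵀ) *ᵥ w) ≤ specNorm M ^ 2 * q j := by
      rw [← Matrix.mulVec_mulVec]
      exact norm2Sq_mulVec_le M (Mᵀ *ᵥ w)
    have hsle : specNorm M ^ 2 ≤ βJ * f j := by
      have h := hβ.2 ⟨j, rfl⟩
      rw [div_le_iff₀ (hfpos j)] at h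
      linarith
    have hbound : norm2Sq ((M * Mᵀ) *ᵥ w) ≤ βJ * f j * q j :=
      le_trans hNw (mul_le_mul_of_nonneg_right hsle (hqnn j))
    have hc2 : (0:ℝ) ≤ (α / f j) ^ 2 := sq_nonneg _
    have hstep : (α / f j) ^ 2 * norm2Sq ((M * Mᵀ) *ᵥ w) ≤ (α / f j) ^ 2 * (βJ * f j * q j) :=
      mul_le_mul_of_nonneg_left hbound hc2
    have heq : Q - 2 * (α / f j) * q j + (α / f j) ^ 2 * (βJ * f j * q j)
        = Q - γ * q j / f j := by
      have hfne : f j ≠ 0 := ne_of_gt (hfpos j)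
      field_simp
      ring
    rw [hdot]
    linarith
  -- sum up
  have hQnn : 0 ≤ Q := norm2Sq_nonneg w
  have step1 : ∑ j, (f j / F) *
      norm2Sq (z - (α / f j) • ((colSub A (B j)) * (colSub A (B j))ᵀ) *ᵥ z - bp)
      ≤ ∑ j, (f j / F) * (Q - γ * q j / f j) := by
    apply Finset.sum_le_sum
    intro j _
    exact mul_le_mul_of_nonneg_left (hperj j) (div_nonneg (le_of_lt (hfpos j)) (le_of_lt hFpos))
  have step2 : ∑ j, (f j / F) * (Q - γ * q j / f j) = Q - γ / F * norm2Sq (Aᵀ *ᵥ w) := by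
    have h1 : ∀ j, (f j / F) * (Q - γ * q j / f j) = f j * Q / F - γ * q j / F := by
      intro j
      have hfne : f j ≠ 0 := ne_of_gt (hfpos j)
      have hFne : F ≠ 0 := ne_of_gt hFpos
      field_simp
    have hFne : F ≠ 0 := ne_of_gt hFpos
    rw [Finset.sum_congr rfl fun j _ => h1 j, Finset.sum_sub_distrib, ← Finset.sum_div,
      ← Finset.sum_mul, hFsum, ← hqsum, Finset.mul_sum]
    congr 1
    · field_simp
    · apply Finset.sum_congr rfl
      intro j _
      ring
  have step3 : Q - γ / F * norm2Sq (Aᵀ *ᵥ w) ≤ (1 - γ * σr ^ 2 / F) * Q := by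
    have h1 : γ / F * (σr ^ 2 * Q) ≤ γ / F * norm2Sq (Aᵀ *ᵥ w) :=
      mul_le_mul_of_nonneg_left heig (div_nonneg (le_of_lt hγpos) (le_of_lt hFpos))
    have h2 : (1 - γ * σr ^ 2 / F) * Q = Q - γ / F * (σr ^ 2 * Q) := by ring
    linarith
  calc ∑ j, (f j / F) *
      norm2Sq (z - (α / f j) • ((colSub A (B j)) * (colSub A (B j))ᵀ) *ᵥ z - bp)
      ≤ Q - γ / F * norm2Sq (Aᵀ *ᵥ w) := by rw [← step2]; exact step1
  _ ≤ (1 - γ * σr ^ 2 / F) * Q := step3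
  _ = (1 - (2 * α - α ^ 2 * βJ) * σr ^ 2 / frobSq A) * norm2Sq (z - (1 - A * P) *ᵥ b) := by
      rw [hγ, hF, ← hbp, hv, hQ]
end

section
/- Deterministic single-step bound: let A ∈ ℝ^{m×n}, let A_I be a nonzero row submatrix, α > 0, and β = ‖A_I‖₂²/‖A_I‖_F². For any vectors x, e (with e = x − x*) the update error satisfies ‖e − (α/‖A_I‖_F²)(A_I)ᵀ A_I e‖₂² ≤ ‖e‖₂² − (2α − α²β)‖A_I e‖₂²/‖A_I‖_F². -/
open Matrix

lemma norm2Sq_eq_norm_sq {m : ℕ} (v : Fin m → ℝ) :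
    norm2Sq v = ‖(WithLp.equiv 2 (Fin m → ℝ)).symm v‖ ^ 2 := by
  rw [EuclideanSpace.norm_eq, Real.sq_sqrt (by positivity)]
  simp [norm2Sq, sq_abs]

lemma dotProduct_eq_inner {m : ℕ} (u z : Fin m → ℝ) :
    u ⬝ᵥ z = inner ℝ ((WithLp.equiv 2 (Fin m → ℝ)).symm u) ((WithLp.equiv 2 (Fin m → ℝ)).symm z) := by
  simp [PiLp.inner_apply, dotProduct, mul_comm]

lemma mulVec_norm_le {q m : ℕ} (A : Matrix (Fin q) (Fin m) ℝ) (v : Fin m → ℝ) :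
    ‖(WithLp.equiv 2 (Fin q → ℝ)).symm (A.mulVec v)‖ ≤
      specNorm A * ‖(WithLp.equiv 2 (Fin m → ℝ)).symm v‖ := by
  have := (LinearMap.toContinuousLinearMap (Matrix.toEuclideanLin A)).le_opNorm
    ((WithLp.equiv 2 (Fin m → ℝ)).symm v)
  simpa [Matrix.toEuclideanLin_apply, specNorm] using this

/-- Key inequality: ‖Aᵀ A e‖² ≤ ‖A‖₂² ‖A e‖². -/
lemma key_ineq {q m : ℕ} (A : Matrix (Fin q) (Fin m) ℝ) (e : Fin m → ℝ) :
    norm2Sq (Aᵀ.mulVec (A.mulVec e)) ≤ specNorm A ^ 2 * norm2Sq (A.mulVec e) := by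
  set u := A.mulVec e with hu
  set w := Aᵀ.mulVec u with hw
  set W := (WithLp.equiv 2 (Fin m → ℝ)).symm w
  set U := (WithLp.equiv 2 (Fin q → ℝ)).symm u
  have h1 : norm2Sq w = u ⬝ᵥ (A.mulVec w) := by
    have : w ⬝ᵥ w = u ⬝ᵥ (A.mulVec w) := by
      rw [Matrix.dotProduct_mulVec, Matrix.vecMul_transpose, dotProduct_comm]
    rw [← this]; simp [norm2Sq, dotProduct, sq]
  have hCS : u ⬝ᵥ (A.mulVec w) ≤ ‖U‖ * ‖(WithLp.equiv 2 (Fin q → ℝ)).symm (A.mulVec w)‖ := by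
    rw [dotProduct_eq_inner]
    exact real_inner_le_norm _ _
  have hAw : ‖(WithLp.equiv 2 (Fin q → ℝ)).symm (A.mulVec w)‖ ≤ specNorm A * ‖W‖ :=
    mulVec_norm_le A w
  have hWsq : ‖W‖ ^ 2 ≤ ‖U‖ * (specNorm A * ‖W‖) := by
    calc ‖W‖ ^ 2 = norm2Sq w := (norm2Sq_eq_norm_sq w).symm
    _ = u ⬝ᵥ (A.mulVec w) := h1
    _ ≤ ‖U‖ * ‖(WithLp.equiv 2 (Fin q → ℝ)).symm (A.mulVec w)‖ := hCS
    _ ≤ ‖U‖ * (specNorm A * ‖W‖) :=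
        mul_le_mul_of_nonneg_left hAw (norm_nonneg _)
  have hW : ‖W‖ ≤ specNorm A * ‖U‖ := by
    rcases eq_or_lt_of_le (norm_nonneg W) with h0 | h0
    · rw [← h0]
      have : (0:ℝ) ≤ specNorm A := norm_nonneg _
      positivity
    · nlinarith
  calc norm2Sq w = ‖W‖ ^ 2 := norm2Sq_eq_norm_sq w
  _ ≤ (specNorm A * ‖U‖) ^ 2 := by
      apply sq_le_sq' _ hW
      nlinarith [norm_nonneg W]
  _ = specNorm A ^ 2 * norm2Sq u := by
      rw [norm2Sq_eq_norm_sq u]; ring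

lemma frobSq_pos_s14 {q m : ℕ} (A : Matrix (Fin q) (Fin m) ℝ) (hA : A ≠ 0) :
    0 < frobSq A := by
  have h : ∃ i j, A i j ≠ 0 := by
    by_contra h
    push_neg at h
    exact hA (by ext i j; exact h i j)
  obtain ⟨i, j, hij⟩ := h
  have h1 : (A i j) ^ 2 ≤ ∑ j', (A i j') ^ 2 :=
    Finset.single_le_sum (f := fun j' => (A i j') ^ 2)
      (fun k _ => sq_nonneg _) (Finset.mem_univ j)
  have h2 : ∑ j', (A i j') ^ 2 ≤ frobSq A :=
    Finset.single_le_sum (f := fun i' => ∑ j', (A i' j') ^ 2)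
      (fun k _ => Finset.sum_nonneg fun _ _ => sq_nonneg _) (Finset.mem_univ i)
  have : 0 < (A i j) ^ 2 := by positivity
  linarith

theorem stmt14 {p n : ℕ} (AI : Matrix (Fin p) (Fin n) ℝ) (hAI : AI ≠ 0)
    (α : ℝ) (hα : 0 < α) (e : Fin n → ℝ) :
    norm2Sq (e - (α / frobSq AI) • (AIᵀ * AI).mulVec e)
      ≤ norm2Sq e - (2 * α - α ^ 2 * (specNorm AI ^ 2 / frobSq AI)) *
          norm2Sq (AI.mulVec e) / frobSq AI := by
  have hF : 0 < frobSq AI := frobSq_pos_s14 AI hAI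
  set F := frobSq AI
  set c := α / F with hc
  set u := AI.mulVec e with hu
  set w := (AIᵀ * AI).mulVec e with hw
  have hww : w = AIᵀ.mulVec u := by rw [hw, hu, ← Matrix.mulVec_mulVec]
  have hkey : norm2Sq w ≤ specNorm AI ^ 2 * norm2Sq u := by
    rw [hww]; exact key_ineq AI e
  have hew : e ⬝ᵥ w = norm2Sq u := by
    rw [hww, Matrix.dotProduct_mulVec, Matrix.vecMul_transpose, ← hu]
    simp [norm2Sq, dotProduct, sq]
  have hexp : norm2Sq (e - c • w) = norm2Sq e - 2 * c * (e ⬝ᵥ w) + c ^ 2 * norm2Sq w := by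
    simp only [norm2Sq, Pi.sub_apply, Pi.smul_apply, smul_eq_mul, dotProduct]
    rw [Finset.mul_sum, Finset.mul_sum, ← Finset.sum_sub_distrib, ← Finset.sum_add_distrib]
    congr 1; funext i; ring
  rw [hexp, hew]
  have hunn : 0 ≤ norm2Sq u := Finset.sum_nonneg fun _ _ => sq_nonneg _
  have h2 : c ^ 2 * norm2Sq w ≤ c ^ 2 * (specNorm AI ^ 2 * norm2Sq u) :=
    mul_le_mul_of_nonneg_left hkey (sq_nonneg c)
  have hgoal : norm2Sq e - 2 * c * norm2Sq u + c ^ 2 * (specNorm AI ^ 2 * norm2Sq u)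
      = norm2Sq e - (2 * α - α ^ 2 * (specNorm AI ^ 2 / F)) * norm2Sq u / F := by
    rw [hc]; field_simp; ring
  linarith
end
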